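/- Let p ≥ 2 and n ≥ 3 be given (p real, n an integer), let φ(t) = t|t|^{p-2}, let f : ℝ → ℝ be continuously differentiable, and let F(u) = ∫₀ᵘ f(t) dt. Let u ∈ C²([0,1]) satisfy (φ(u'(r)))' + ((n-1)/r) φ(u'(r)) + f(u(r)) = 0 for 0 < r < 1, with u'(0) = u(1) = 0, and let ψ ∈ C²([0,1]). Then ∫₀¹ [ ( p F(u(r)) − u(r) f(u(r)) ) (ψ(r) r^{n-1})' + p ψ'(r) u(r) f(u(r)) r^{n-1} − φ(u'(r)) u(r) L_p[ψ](r) r^{n-3} ] dr = (p−1) φ(u'(1)) ψ(1) u'(1), where L_p[ψ](r) = (p−1) r² ψ''(r) − (n−1) r ψ'(r) + (n−1) ψ(r). -/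

import Mathlib

open Set Real

lemma phi_hasDerivAt (p : ℝ) (hp : 2 ≤ p) (t : ℝ) :
    HasDerivAt (fun s : ℝ => s * |s| ^ (p - 2)) ((p - 1) * |t| ^ (p - 2)) t := by
  rcases lt_trichotomy t 0 with ht | rfl | ht
  · rw [abs_of_neg ht]
    have h2 : HasDerivAt (fun s : ℝ => (-s) ^ (p - 1))
        ((p - 1) * (-t) ^ (p - 1 - 1) * (-1)) t :=
      (Real.hasDerivAt_rpow_const (p := p - 1) (Or.inl (by linarith))).comp t (hasDerivAt_neg t)
    have h1 : HasDerivAt (fun s : ℝ => -((-s) ^ (p - 1))) ((p - 1) * (-t) ^ (p - 2)) t := by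
      have e : (p - 1) * (-t) ^ (p - 2) = -((p - 1) * (-t) ^ (p - 1 - 1) * (-1)) := by
        rw [show p - 1 - 1 = p - 2 by ring]; ring
      rw [e]; exact h2.neg
    refine h1.congr_of_eventuallyEq ?_
    filter_upwards [Iio_mem_nhds ht] with s hs
    have hs' : (0:ℝ) < -s := by simpa using hs
    rw [abs_of_neg hs]
    rw [show p - 1 = 1 + (p - 2) by ring, Real.rpow_add hs', Real.rpow_one]
    ring
  · rcases eq_or_lt_of_le hp with rfl | hp2
    · simp only [sub_self, Real.rpow_zero, mul_one, show (2:ℝ) - 1 = 1 by norm_num]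
      exact hasDerivAt_id 0
    · have hz : |(0:ℝ)| ^ (p - 2) = 0 := by
        rw [abs_zero, Real.zero_rpow (by linarith)]
      rw [hz, mul_zero]
      rw [hasDerivAt_iff_tendsto_slope]
      have habs : Filter.Tendsto (fun s : ℝ => |s|) (nhds 0) (nhds 0) := by
        simpa using continuous_abs.tendsto (0:ℝ)
      have hrp : Filter.Tendsto (fun x : ℝ => x ^ (p - 2)) (nhds 0) (nhds 0) := by
        have := Real.continuousAt_rpow_const 0 (p - 2) (Or.inr (by linarith))
        simpa [ContinuousAt, Real.zero_rpow (show p - 2 ≠ 0 by linarith)] using this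
      have htot : Filter.Tendsto (fun s : ℝ => |s| ^ (p - 2)) (nhds 0) (nhds 0) := hrp.comp habs
      refine (htot.mono_left nhdsWithin_le_nhds).congr' ?_
      filter_upwards [self_mem_nhdsWithin] with s hs
      have hs0 : s ≠ 0 := hs
      rw [slope_def_field]
      simp only [zero_mul, sub_zero]
      rw [eq_div_iff hs0]; ring
  · rw [abs_of_pos ht]
    have h1 : HasDerivAt (fun s : ℝ => s ^ (p - 1))
        ((p - 1) * t ^ (p - 1 - 1)) t :=
      Real.hasDerivAt_rpow_const (Or.inl (ne_of_gt ht))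
    rw [show p - 1 - 1 = p - 2 by ring] at h1
    refine h1.congr_of_eventuallyEq ?_
    filter_upwards [Ioi_mem_nhds ht] with s hs
    rw [abs_of_pos hs]
    rw [show p - 1 = 1 + (p - 2) by ring, Real.rpow_add hs, Real.rpow_one]


/-- Generalized radial Pohozhaev identity for the p-Laplacian (Theorem 3.1).
`φ(t) = t |t|^{p-2}`, `u` is C² on `[0,1]`, solves
`(φ(u'))' + ((n-1)/r) φ(u') + f(u) = 0` on `(0,1)` with `u'(0) = u(1) = 0`,
and `ψ` is C² on `[0,1]`.  Here `(ψ r^{n-1})'` has been expanded by the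
product rule, and `L_p[ψ] = (p-1) r² ψ'' - (n-1) r ψ' + (n-1) ψ`. -/
theorem generalized_pohozhaev_pLaplace
    (p : ℝ) (hp : 2 ≤ p) (n : ℕ) (hn : 3 ≤ n)
    (φ : ℝ → ℝ) (hφ : ∀ t : ℝ, φ t = t * |t| ^ (p - 2))
    (f : ℝ → ℝ) (hf : ContDiff ℝ 1 f)
    (F : ℝ → ℝ) (hF : ∀ x : ℝ, F x = ∫ t in (0:ℝ)..x, f t)
    (u u' u'' : ℝ → ℝ)
    (hu : ∀ r ∈ Icc (0:ℝ) 1, HasDerivAt u (u' r) r)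
    (hu' : ∀ r ∈ Icc (0:ℝ) 1, HasDerivAt u' (u'' r) r)
    (hu''c : ContinuousOn u'' (Icc (0:ℝ) 1))
    (ψ ψ' ψ'' : ℝ → ℝ)
    (hψ : ∀ r ∈ Icc (0:ℝ) 1, HasDerivAt ψ (ψ' r) r)
    (hψ' : ∀ r ∈ Icc (0:ℝ) 1, HasDerivAt ψ' (ψ'' r) r)
    (hψ''c : ContinuousOn ψ'' (Icc (0:ℝ) 1))
    (hode : ∀ r ∈ Ioo (0:ℝ) 1,
      deriv (fun s => φ (u' s)) r + ((n : ℝ) - 1) / r * φ (u' r) + f (u r) = 0)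
    (hbc0 : u' 0 = 0) (hbc1 : u 1 = 0) :
    ∫ r in (0:ℝ)..1,
        ((p * F (u r) - u r * f (u r))
            * (ψ' r * r ^ (n - 1) + ((n : ℝ) - 1) * ψ r * r ^ (n - 2))
          + p * ψ' r * u r * f (u r) * r ^ (n - 1)
          - φ (u' r) * u r
            * ((p - 1) * r ^ 2 * ψ'' r - ((n : ℝ) - 1) * r * ψ' r
                + ((n : ℝ) - 1) * ψ r)
            * r ^ (n - 3))
      = (p - 1) * φ (u' 1) * ψ 1 * u' 1 := by
  obtain ⟨m, rfl⟩ : ∃ m, n = m + 3 := ⟨n - 3, by omega⟩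
  have e1 : m + 3 - 1 = m + 2 := rfl
  have e2 : m + 3 - 2 = m + 1 := rfl
  have e3 : m + 3 - 3 = m := rfl
  -- derivative facts
  have hfc : Continuous f := hf.continuous
  have hFd : ∀ x : ℝ, HasDerivAt F (f x) x := by
    intro x
    rw [funext hF]
    exact intervalIntegral.integral_hasDerivAt_right (hfc.intervalIntegrable _ _)
      (hfc.stronglyMeasurableAtFilter _ _) hfc.continuousAt
  have hF0 : F 0 = 0 := by rw [hF]; simp
  have hFc : Continuous F := continuous_iff_continuousAt.2 fun x => (hFd x).continuousAt
  have hphic : Continuous (fun t : ℝ => t * |t| ^ (p - 2)) :=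
    continuous_iff_continuousAt.2 fun t => (phi_hasDerivAt p hp t).continuousAt
  have hφc : Continuous φ := by rw [funext hφ]; exact hphic
  -- the antiderivative H
  set H : ℝ → ℝ := fun s =>
      p * F (u s) * ψ s * s ^ (m + 2)
      - (p - 1) * u s * ψ' s * φ (u' s) * s ^ (m + 2)
      + ((m : ℝ) + 2) * u s * ψ s * φ (u' s) * s ^ (m + 1)
      + (p - 1) * u' s * ψ s * φ (u' s) * s ^ (m + 2) with hH
  -- derivative of H on Icc
  have hHd : ∀ r ∈ Icc (0:ℝ) 1, HasDerivAt H
      (( p * f (u r) * u' r * ψ r * r ^ (m + 2) + p * F (u r) * ψ' r * r ^ (m + 2)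
          + ((m : ℝ) + 2) * p * F (u r) * ψ r * r ^ (m + 1))
       - ( (p - 1) * u' r * ψ' r * φ (u' r) * r ^ (m + 2)
          + (p - 1) * u r * ψ'' r * φ (u' r) * r ^ (m + 2)
          + (p - 1) * u r * ψ' r * ((p - 1) * |u' r| ^ (p - 2) * u'' r) * r ^ (m + 2)
          + ((m : ℝ) + 2) * (p - 1) * u r * ψ' r * φ (u' r) * r ^ (m + 1))
       + ( ((m : ℝ) + 2) * u' r * ψ r * φ (u' r) * r ^ (m + 1)
          + ((m : ℝ) + 2) * u r * ψ' r * φ (u' r) * r ^ (m + 1)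
          + ((m : ℝ) + 2) * u r * ψ r * ((p - 1) * |u' r| ^ (p - 2) * u'' r) * r ^ (m + 1)
          + ((m : ℝ) + 2) * ((m : ℝ) + 1) * u r * ψ r * φ (u' r) * r ^ m)
       + ( (p - 1) * u'' r * ψ r * φ (u' r) * r ^ (m + 2)
          + (p - 1) * u' r * ψ' r * φ (u' r) * r ^ (m + 2)
          + (p - 1) * u' r * ψ r * ((p - 1) * |u' r| ^ (p - 2) * u'' r) * r ^ (m + 2)
          + ((m : ℝ) + 2) * (p - 1) * u' r * ψ r * φ (u' r) * r ^ (m + 1))) r := by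
    intro r hr
    have hU := hu r hr
    have hU' := hu' r hr
    have hΨ := hψ r hr
    have hΨ' := hψ' r hr
    have hΦ : HasDerivAt (fun s => φ (u' s)) ((p - 1) * |u' r| ^ (p - 2) * u'' r) r := by
      rw [funext hφ]
      exact (phi_hasDerivAt p hp (u' r)).comp r hU'
    have hFu : HasDerivAt (fun s => F (u s)) (f (u r) * u' r) r := (hFd (u r)).comp r hU
    have hpow2 : HasDerivAt (fun s : ℝ => s ^ (m + 2)) (((m:ℝ) + 2) * r ^ (m + 1)) r := by
      simpa using hasDerivAt_pow (m + 2) r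
    have hpow1 : HasDerivAt (fun s : ℝ => s ^ (m + 1)) (((m:ℝ) + 1) * r ^ m) r := by
      simpa using hasDerivAt_pow (m + 1) r
    have h1 := ((hFu.const_mul p).mul hΨ).mul hpow2
    have h2 := (((hU.const_mul (p - 1)).mul hΨ').mul hΦ).mul hpow2
    have h3 := (((hU.const_mul ((m : ℝ) + 2)).mul hΨ).mul hΦ).mul hpow1
    have h4 := (((hU'.const_mul (p - 1)).mul hΨ).mul hΦ).mul hpow2
    have htot := ((h1.sub h2).add h3).add h4
    convert htot using 1
    · rfl
    · rfl
    · rfl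
    · simp only [Pi.mul_apply]
      ring
  have hHcont : ContinuousOn H (Icc (0:ℝ) 1) := fun r hr =>
    (hHd r hr).continuousAt.continuousWithinAt
  -- continuity of the integrand
  have cu : ContinuousOn u (Icc (0:ℝ) 1) := fun r hr => (hu r hr).continuousAt.continuousWithinAt
  have cu' : ContinuousOn u' (Icc (0:ℝ) 1) := fun r hr => (hu' r hr).continuousAt.continuousWithinAt
  have cψ : ContinuousOn ψ (Icc (0:ℝ) 1) := fun r hr => (hψ r hr).continuousAt.continuousWithinAt
  have cψ' : ContinuousOn ψ' (Icc (0:ℝ) 1) := fun r hr => (hψ' r hr).continuousAt.continuousWithinAt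
  have cFu : ContinuousOn (fun r => F (u r)) (Icc (0:ℝ) 1) := hFc.comp_continuousOn cu
  have cfu : ContinuousOn (fun r => f (u r)) (Icc (0:ℝ) 1) := hfc.comp_continuousOn cu
  have cφu : ContinuousOn (fun r => φ (u' r)) (Icc (0:ℝ) 1) := hφc.comp_continuousOn cu'
  have hGcont : ContinuousOn (fun r : ℝ =>
        ((p * F (u r) - u r * f (u r))
            * (ψ' r * r ^ (m + 3 - 1) + (((m:ℕ) + 3 : ℕ) - 1 : ℝ) * ψ r * r ^ (m + 3 - 2))
          + p * ψ' r * u r * f (u r) * r ^ (m + 3 - 1)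
          - φ (u' r) * u r
            * ((p - 1) * r ^ 2 * ψ'' r - (((m:ℕ) + 3 : ℕ) - 1 : ℝ) * r * ψ' r
                + (((m:ℕ) + 3 : ℕ) - 1 : ℝ) * ψ r)
            * r ^ (m + 3 - 3))) (Icc (0:ℝ) 1) := by
    apply ContinuousOn.sub
    · apply ContinuousOn.add
      · exact (((continuousOn_const.mul cFu).sub (cu.mul cfu)).mul
          ((cψ'.mul (continuousOn_pow _)) |>.add
            ((continuousOn_const.mul cψ).mul (continuousOn_pow _))))
      · exact ((((continuousOn_const.mul cψ').mul cu).mul cfu).mul (continuousOn_pow _))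
    · refine ((cφu.mul cu).mul ?_).mul (continuousOn_pow _)
      refine ContinuousOn.add (ContinuousOn.sub ?_ ?_) ?_
      · exact (continuousOn_const.mul (continuousOn_pow 2)).mul hψ''c
      · exact (continuousOn_const.mul continuousOn_id).mul cψ'
      · exact continuousOn_const.mul cψ
  have hGint := hGcont.intervalIntegrable_of_Icc (μ := MeasureTheory.volume) zero_le_one
  -- the FTC
  have hmain := intervalIntegral.integral_eq_sub_of_hasDeriv_right_of_le zero_le_one hHcont
    (f' := fun r : ℝ =>
        ((p * F (u r) - u r * f (u r))
            * (ψ' r * r ^ (m + 3 - 1) + (((m:ℕ) + 3 : ℕ) - 1 : ℝ) * ψ r * r ^ (m + 3 - 2))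
          + p * ψ' r * u r * f (u r) * r ^ (m + 3 - 1)
          - φ (u' r) * u r
            * ((p - 1) * r ^ 2 * ψ'' r - (((m:ℕ) + 3 : ℕ) - 1 : ℝ) * r * ψ' r
                + (((m:ℕ) + 3 : ℕ) - 1 : ℝ) * ψ r)
            * r ^ (m + 3 - 3)))
    (by
      intro r hr
      have hrIcc : r ∈ Icc (0:ℝ) 1 := ⟨le_of_lt hr.1, le_of_lt hr.2⟩
      have hΦ : HasDerivAt (fun s => φ (u' s)) ((p - 1) * |u' r| ^ (p - 2) * u'' r) r := by
        rw [funext hφ]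
        exact (phi_hasDerivAt p hp (u' r)).comp r (hu' r hrIcc)
      have hode' := hode r hr
      rw [hΦ.deriv] at hode'
      have hr0 : r ≠ 0 := ne_of_gt hr.1
      have key : r * ((p - 1) * |u' r| ^ (p - 2) * u'' r)
          = -((((m:ℝ) + 2)) * φ (u' r)) - r * f (u r) := by
        have h2 : ((p - 1) * |u' r| ^ (p - 2) * u'' r
            + (((m:ℕ) + 3 : ℕ) - 1 : ℝ) / r * φ (u' r) + f (u r)) * r = 0 := by
          rw [hode']; ring
        field_simp at h2
        push_cast at h2
        linear_combination h2
      have hEG : (( p * f (u r) * u' r * ψ r * r ^ (m + 2) + p * F (u r) * ψ' r * r ^ (m + 2)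
          + ((m : ℝ) + 2) * p * F (u r) * ψ r * r ^ (m + 1))
       - ( (p - 1) * u' r * ψ' r * φ (u' r) * r ^ (m + 2)
          + (p - 1) * u r * ψ'' r * φ (u' r) * r ^ (m + 2)
          + (p - 1) * u r * ψ' r * ((p - 1) * |u' r| ^ (p - 2) * u'' r) * r ^ (m + 2)
          + ((m : ℝ) + 2) * (p - 1) * u r * ψ' r * φ (u' r) * r ^ (m + 1))
       + ( ((m : ℝ) + 2) * u' r * ψ r * φ (u' r) * r ^ (m + 1)
          + ((m : ℝ) + 2) * u r * ψ' r * φ (u' r) * r ^ (m + 1)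
          + ((m : ℝ) + 2) * u r * ψ r * ((p - 1) * |u' r| ^ (p - 2) * u'' r) * r ^ (m + 1)
          + ((m : ℝ) + 2) * ((m : ℝ) + 1) * u r * ψ r * φ (u' r) * r ^ m)
       + ( (p - 1) * u'' r * ψ r * φ (u' r) * r ^ (m + 2)
          + (p - 1) * u' r * ψ' r * φ (u' r) * r ^ (m + 2)
          + (p - 1) * u' r * ψ r * ((p - 1) * |u' r| ^ (p - 2) * u'' r) * r ^ (m + 2)
          + ((m : ℝ) + 2) * (p - 1) * u' r * ψ r * φ (u' r) * r ^ (m + 1)))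
          = ((p * F (u r) - u r * f (u r))
            * (ψ' r * r ^ (m + 3 - 1) + (((m:ℕ) + 3 : ℕ) - 1 : ℝ) * ψ r * r ^ (m + 3 - 2))
          + p * ψ' r * u r * f (u r) * r ^ (m + 3 - 1)
          - φ (u' r) * u r
            * ((p - 1) * r ^ 2 * ψ'' r - (((m:ℕ) + 3 : ℕ) - 1 : ℝ) * r * ψ' r
                + (((m:ℕ) + 3 : ℕ) - 1 : ℝ) * ψ r)
            * r ^ (m + 3 - 3)) := by
        simp only [e1, e2, e3]
        push_cast
        have hphir : φ (u' r) = u' r * |u' r| ^ (p - 2) := hφ (u' r)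
        linear_combination
          ((-(p - 1) * u r * ψ' r + p * u' r * ψ r) * r ^ (m + 1)
            + ((m : ℝ) + 2) * u r * ψ r * r ^ m) * key
          + ((p - 1) * u'' r * ψ r * r ^ (m + 2)) * hphir
      exact (hEG ▸ (hHd r hrIcc)).hasDerivWithinAt)
    hGint
  rw [hmain]
  simp only [hH, hbc1, hF0, one_pow, mul_zero, zero_mul, mul_one,
    ne_eq, zero_pow, pow_succ, mul_zero, zero_mul]
  ring_nf
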